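/- If in addition the k-NN classifier has error P(y^knn ≠ y) ≤ 1/2 (equivalently, λ0 + λ1 ≥ 1 under balanced priors), then the subset error rates satisfy γ_S ≤ γ_noisy. -/

import Mathlib

open MeasureTheory ProbabilityTheory ENNReal

lemma ennreal_arith_aux (a b m0 m1 PS PA : ℝ≥0∞)
    (hPS : PS = 2 * a * m0 + 2 * b * m1) (hPA : PA = a + b) (hm : m1 ≤ m0)
    (hPS0 : PS ≠ 0) (hPStop : PS ≠ ∞) (hPA0 : PA ≠ 0) (hPAtop : PA ≠ ∞) :
    PS⁻¹ * (2 * b * m1) ≤ PA⁻¹ * b := by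
  rw [mul_comm, ← div_eq_mul_inv, mul_comm PA⁻¹, ← div_eq_mul_inv,
    ENNReal.div_le_iff hPS0 hPStop]
  have hre : b / PA * PS = b * PS / PA := by
    rw [div_eq_mul_inv, div_eq_mul_inv, mul_right_comm]
  rw [hre, ENNReal.le_div_iff_mul_le (Or.inl hPA0) (Or.inl hPAtop)]
  calc 2 * b * m1 * PA = (2 * b * a) * m1 + 2 * b * m1 * b := by rw [hPA]; ring
    _ ≤ (2 * b * a) * m0 + 2 * b * m1 * b :=
        add_le_add_left (mul_le_mul_right hm _) _
    _ = b * PS := by rw [hPS]; ring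

lemma fin2_cases (x : Fin 2) : x = 0 ∨ x = 1 := by
  revert x; decide

lemma split_fin2 {Ω : Type*} [MeasurableSpace Ω] (P : MeasureTheory.Measure Ω)
    (f : Ω → Fin 2) (hf : Measurable f) (T : Set Ω) (hT : MeasurableSet T) :
    P T = P (T ∩ {ω | f ω = 0}) + P (T ∩ {ω | f ω = 1}) := by
  have h1 : MeasurableSet {ω | f ω = 1} := hf (measurableSet_singleton 1)
  have hdisj : Disjoint (T ∩ {ω | f ω = 0}) (T ∩ {ω | f ω = 1}) := by
    apply Set.disjoint_left.mpr
    rintro ω ⟨-, h0'⟩ ⟨-, h1'⟩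
    simp only [Set.mem_setOf_eq] at h0' h1'
    rw [h0'] at h1'; exact absurd h1' (by decide)
  rw [← measure_union hdisj (hT.inter h1), ← Set.inter_union_distrib_left]
  have huniv : ({ω | f ω = 0} ∪ {ω | f ω = 1} : Set Ω) = Set.univ := by
    ext ω; simpa using fin2_cases (f ω)
  rw [huniv, Set.inter_univ]

/-- If in addition the k-NN classifier has error `P(y^knn ≠ y) ≤ 1/2`, then the subset
error rate satisfies `γ_S ≤ γ_noisy`. -/
theorem subset_error_rate_gamma_le
    {Ω : Type*} [MeasurableSpace Ω] (P : Measure Ω) [IsProbabilityMeasure P]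
    (y yhat yknn : Ω → Fin 2)
    (hy : Measurable y) (hyhat : Measurable yhat) (hyknn : Measurable yknn)
    -- balanced priors
    (hbal0 : P {ω | y ω = 0} = 1 / 2) (hbal1 : P {ω | y ω = 1} = 1 / 2)
    -- conditional independence given the true label
    (hcondind : ∀ c : Fin 2,
      P[{ω | yhat ω = 0 ∧ yknn ω = 0} | {ω | y ω = c}]
        = P[{ω | yhat ω = 0} | {ω | y ω = c}] * P[{ω | yknn ω = 0} | {ω | y ω = c}])
    -- positivity of the conditioning events
    (hpos_yhat : P {ω | yhat ω = 0} ≠ 0)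
    (hpos_y0 : P {ω | y ω = 0} ≠ 0) (hpos_y1 : P {ω | y ω = 1} ≠ 0)
    (hpos_sub : P {ω | yhat ω = 0 ∧ yknn ω = 0} ≠ 0)
    -- the named quantities
    (γnoisy lam0 lam1 γS : ℝ≥0∞)
    (hγnoisy : γnoisy = P[{ω | y ω = 1} | {ω | yhat ω = 0}])
    (hlam0 : lam0 = P[{ω | yknn ω = 0} | {ω | y ω = 0}])
    (hlam1 : lam1 = P[{ω | yknn ω = 1} | {ω | y ω = 1}])
    (hγS : γS = P[{ω | y ω = 1} | {ω | yhat ω = 0 ∧ yknn ω = 0}])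
    -- the k-NN classifier is no worse than random guessing
    (herr : P {ω | yknn ω ≠ y ω} ≤ 1 / 2) :
    γS ≤ γnoisy := by
  classical
  have hSdef : {ω | yhat ω = 0 ∧ yknn ω = 0}
      = ({ω | yhat ω = 0} ∩ {ω | yknn ω = 0} : Set Ω) := rfl
  have mY0 : MeasurableSet {ω | y ω = 0} := hy (measurableSet_singleton 0)
  have mY1 : MeasurableSet {ω | y ω = 1} := hy (measurableSet_singleton 1)
  have mA : MeasurableSet {ω | yhat ω = 0} := hyhat (measurableSet_singleton 0)
  have mK : MeasurableSet {ω | yknn ω = 0} := hyknn (measurableSet_singleton 0)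
  have mK1 : MeasurableSet {ω | yknn ω = 1} := hyknn (measurableSet_singleton 1)
  have mS : MeasurableSet ({ω | yhat ω = 0} ∩ {ω | yknn ω = 0} : Set Ω) := mA.inter mK
  have htwo : ((1 : ℝ≥0∞) / 2)⁻¹ = 2 := by rw [one_div, inv_inv]
  -- conditional independence in unconditional form
  have hd : ∀ c : Fin 2, P ({ω | y ω = c} ∩ ({ω | yhat ω = 0} ∩ {ω | yknn ω = 0}))
      = 2 * P ({ω | y ω = c} ∩ {ω | yhat ω = 0}) * P ({ω | y ω = c} ∩ {ω | yknn ω = 0}) := by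
    intro c
    have hmc : MeasurableSet {ω | y ω = c} := hy (measurableSet_singleton c)
    have hbc : P {ω | y ω = c} = 1 / 2 := by
      rcases fin2_cases c with h | h <;> rw [h]
      · exact hbal0
      · exact hbal1
    have h := hcondind c
    rw [hSdef, cond_apply hmc, cond_apply hmc, cond_apply hmc, hbc, htwo] at h
    have h2 : (2 : ℝ≥0∞) * P ({ω | y ω = c} ∩ ({ω | yhat ω = 0} ∩ {ω | yknn ω = 0}))
        = 2 * (2 * P ({ω | y ω = c} ∩ {ω | yhat ω = 0})
            * P ({ω | y ω = c} ∩ {ω | yknn ω = 0})) := by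
      rw [h]; ring
    exact (ENNReal.mul_right_inj (by norm_num) (by norm_num)).mp h2
  have hd0 : P ({ω | y ω = 0} ∩ ({ω | yhat ω = 0} ∩ {ω | yknn ω = 0}))
      = 2 * P ({ω | y ω = 0} ∩ {ω | yhat ω = 0}) * P ({ω | y ω = 0} ∩ {ω | yknn ω = 0}) := hd 0
  have hd1 : P ({ω | y ω = 1} ∩ ({ω | yhat ω = 0} ∩ {ω | yknn ω = 0}))
      = 2 * P ({ω | y ω = 1} ∩ {ω | yhat ω = 0}) * P ({ω | y ω = 1} ∩ {ω | yknn ω = 0}) := hd 1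
  -- m1 ≤ m0 from the error bound
  have hmle : P ({ω | y ω = 1} ∩ {ω | yknn ω = 0}) ≤ P ({ω | y ω = 0} ∩ {ω | yknn ω = 0}) := by
    have herr_eq : {ω | yknn ω ≠ y ω}
        = ({ω | yknn ω = 0} ∩ {ω | y ω = 1}) ∪ ({ω | yknn ω = 1} ∩ {ω | y ω = 0}) := by
      ext ω
      have key : ∀ u v : Fin 2, (u ≠ v) ↔ ((u = 0 ∧ v = 1) ∨ (u = 1 ∧ v = 0)) := by decide
      simpa [Set.mem_setOf_eq] using key (yknn ω) (y ω)
    have hdisj : Disjoint ({ω | yknn ω = 0} ∩ {ω | y ω = 1})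
        ({ω | yknn ω = 1} ∩ {ω | y ω = 0}) := by
      apply Set.disjoint_left.mpr
      rintro ω ⟨-, h1'⟩ ⟨-, h0'⟩
      simp only [Set.mem_setOf_eq] at h0' h1'
      rw [h0'] at h1'; exact absurd h1' (by decide)
    have herr2 : P ({ω | yknn ω = 0} ∩ {ω | y ω = 1})
        + P ({ω | yknn ω = 1} ∩ {ω | y ω = 0}) ≤ 1 / 2 := by
      rw [← measure_union hdisj (mK1.inter mY0), ← herr_eq]; exact herr
    have hsplitY0 : P ({ω | y ω = 0} ∩ {ω | yknn ω = 0})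
        + P ({ω | y ω = 0} ∩ {ω | yknn ω = 1}) = 1 / 2 := by
      rw [← split_fin2 P yknn hyknn _ mY0, hbal0]
    have h3 : P ({ω | y ω = 1} ∩ {ω | yknn ω = 0}) + P ({ω | y ω = 0} ∩ {ω | yknn ω = 1})
        ≤ P ({ω | y ω = 0} ∩ {ω | yknn ω = 0}) + P ({ω | y ω = 0} ∩ {ω | yknn ω = 1}) := by
      calc P ({ω | y ω = 1} ∩ {ω | yknn ω = 0}) + P ({ω | y ω = 0} ∩ {ω | yknn ω = 1})
          = P ({ω | yknn ω = 0} ∩ {ω | y ω = 1}) + P ({ω | yknn ω = 1} ∩ {ω | y ω = 0}) := by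
            rw [Set.inter_comm {ω | y ω = 1}, Set.inter_comm {ω | y ω = 0}]
        _ ≤ 1 / 2 := herr2
        _ = _ := hsplitY0.symm
    exact (ENNReal.add_le_add_iff_right (measure_ne_top P _)).mp h3
  -- totals
  have hPA : P {ω | yhat ω = 0}
      = P ({ω | y ω = 0} ∩ {ω | yhat ω = 0}) + P ({ω | y ω = 1} ∩ {ω | yhat ω = 0}) := by
    rw [split_fin2 P y hy _ mA, Set.inter_comm _ {ω | y ω = 0}, Set.inter_comm _ {ω | y ω = 1}]
  have hPS : P ({ω | yhat ω = 0} ∩ {ω | yknn ω = 0} : Set Ω)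
      = 2 * P ({ω | y ω = 0} ∩ {ω | yhat ω = 0}) * P ({ω | y ω = 0} ∩ {ω | yknn ω = 0})
        + 2 * P ({ω | y ω = 1} ∩ {ω | yhat ω = 0}) * P ({ω | y ω = 1} ∩ {ω | yknn ω = 0}) := by
    rw [split_fin2 P y hy _ mS, Set.inter_comm _ {ω | y ω = 0}, Set.inter_comm _ {ω | y ω = 1},
      hd0, hd1]
  rw [hγS, hγnoisy, hSdef, cond_apply mS, cond_apply mA,
    Set.inter_comm ({ω | yhat ω = 0} ∩ {ω | yknn ω = 0}) {ω | y ω = 1},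
    Set.inter_comm {ω | yhat ω = 0} {ω | y ω = 1}, hd1, hPS, hPA]
  exact ennreal_arith_aux _ _ _ _ _ _ rfl rfl hmle
    (hPS ▸ (hSdef ▸ hpos_sub)) (hPS ▸ measure_ne_top P _)
    (hPA ▸ hpos_yhat) (hPA ▸ measure_ne_top P _)
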